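/- Non-monotonicity of (subset-minimal) CXps in the distance parameter: there exists a classifier κ : [0,1]² → {0,1} with κ(1,1)=1, an instance ((1,1),1), the l_∞ norm, and distances ε₁ = 0.5 < ε₂ = 1, such that the set of features {1,2} is a distance-ε₁ CXp but is not a distance-ε₂ CXp (because the singletons {1} and {2} are distance-ε₂ weak CXps). -/

import Mathlib

/-- Distance-`δ` weak CXp for a classifier on `[0,1]²` at the instance `((1,1), 1)`,
using the `l_∞` norm (the sup norm on `Fin 2 → ℝ`). -/
def WCXp2 (κ : (Fin 2 → ℝ) → ℕ) (δ : ℝ) (Y : Set (Fin 2)) : Prop :=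
  ∃ x : Fin 2 → ℝ, (∀ i, x i ∈ Set.Icc (0 : ℝ) 1) ∧ (∀ i ∉ Y, x i = 1) ∧
    ‖x - fun _ => (1 : ℝ)‖ ≤ δ ∧ κ x ≠ 1

/-- Distance-`δ` CXp: a subset-minimal distance-`δ` weak CXp. -/
def CXp2 (κ : (Fin 2 → ℝ) → ℕ) (δ : ℝ) (Y : Set (Fin 2)) : Prop :=
  WCXp2 κ δ Y ∧ ∀ Y' : Set (Fin 2), Y' ⊂ Y → ¬ WCXp2 κ δ Y'

noncomputable def myκ : (Fin 2 → ℝ) → ℕ := fun x =>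
  if x = (fun _ => (1:ℝ)/2) ∨ x = ![0, 1] ∨ x = ![1, 0] then 0 else 1

lemma myκ_half : myκ (fun _ => 1/2) = 0 := by
  simp [myκ]

lemma myκ_01 : myκ ![0, 1] = 0 := by
  unfold myκ
  rw [if_pos (Or.inr (Or.inl rfl))]

lemma myκ_10 : myκ ![1, 0] = 0 := by
  unfold myκ
  rw [if_pos (Or.inr (Or.inr rfl))]

lemma myκ_eq_one (x : Fin 2 → ℝ) (h : myκ x ≠ 1) :
    x = (fun _ => (1:ℝ)/2) ∨ x = ![0, 1] ∨ x = ![1, 0] := by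
  by_contra hc
  exact h (by unfold myκ; rw [if_neg hc])

/-- Non-monotonicity of subset-minimal CXps in the distance parameter: there is a
classifier `κ` on `[0,1]²` with `κ (1,1) = 1`, `κ (0.5,0.5) = 0`, `κ (0,1) = 0`,
`κ (1,0) = 0`, such that for the instance `((1,1),1)` and the `l_∞` norm, the full
feature set `{1,2}` is a distance-`0.5` CXp but not a distance-`1` CXp, because the
singletons `{1}` and `{2}` are distance-`1` weak CXps. -/
theorem cxp_not_monotone_in_distance :
    ∃ κ : (Fin 2 → ℝ) → ℕ,
      κ (fun _ => 1) = 1 ∧ κ (fun _ => 1/2) = 0 ∧ κ ![0, 1] = 0 ∧ κ ![1, 0] = 0 ∧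
      CXp2 κ (1/2) Set.univ ∧
      ¬ CXp2 κ 1 Set.univ ∧
      WCXp2 κ 1 {0} ∧ WCXp2 κ 1 {1} := by
  refine ⟨myκ, ?_, myκ_half, myκ_01, myκ_10, ?_, ?_, ?_, ?_⟩
  · unfold myκ
    rw [if_neg]
    push_neg
    refine ⟨?_, ?_, ?_⟩
    · intro h; have := congrFun h 0; norm_num at this
    · intro h; have := congrFun h 0; norm_num at this
    · intro h; have := congrFun h 1; norm_num at this
  · constructor
    · refine ⟨fun _ => 1/2, fun i => by norm_num, fun i hi => absurd (Set.mem_univ i) hi, ?_, ?_⟩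
      · rw [pi_norm_le_iff_of_nonneg (by norm_num)]
        intro i
        norm_num [Pi.sub_apply, Real.norm_eq_abs, abs_le]
      · rw [myκ_half]; norm_num
    · rintro Y' hY' ⟨x, hbox, hfix, hnorm, hne⟩
      obtain ⟨i, hi⟩ : ∃ i, i ∉ Y' := by
        by_contra h; push_neg at h
        exact hY'.2 (fun j _ => h j)
      have hxi : x i = 1 := hfix i hi
      have hcoord : ∀ j, ‖x j - 1‖ ≤ 1/2 := by
        intro j
        have h1 := norm_le_pi_norm (x - fun _ => (1:ℝ)) j
        rw [Pi.sub_apply] at h1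
        exact le_trans h1 hnorm
      rcases myκ_eq_one x hne with h | h | h
      · rw [h] at hxi; norm_num at hxi
      · have := hcoord 0; rw [h] at this; norm_num at this
      · have := hcoord 1; rw [h] at this; norm_num at this
  · intro ⟨_, hmin⟩
    refine hmin {0} (by simp [Set.ssubset_univ_iff]) ?_
    refine ⟨![0,1], ?_, ?_, ?_, ?_⟩
    · intro i; fin_cases i <;> norm_num
    · intro i hi
      fin_cases i
      · exact absurd rfl hi
      · norm_num
    · rw [pi_norm_le_iff_of_nonneg (by norm_num)]
      intro i; fin_cases i <;> simp [Pi.sub_apply]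
    · rw [myκ_01]; norm_num
  · refine ⟨![0,1], ?_, ?_, ?_, ?_⟩
    · intro i; fin_cases i <;> norm_num
    · intro i hi
      fin_cases i
      · exact absurd rfl hi
      · norm_num
    · rw [pi_norm_le_iff_of_nonneg (by norm_num)]
      intro i; fin_cases i <;> simp [Pi.sub_apply]
    · rw [myκ_01]; norm_num
  · refine ⟨![1,0], ?_, ?_, ?_, ?_⟩
    · intro i; fin_cases i <;> norm_num
    · intro i hi
      fin_cases i
      · norm_num
      · exact absurd rfl hi
    · rw [pi_norm_le_iff_of_nonneg (by norm_num)]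
      intro i; fin_cases i <;> simp [Pi.sub_apply]
    · rw [myκ_10]; norm_num
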